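/- Let D ⊆ F_q and D₁ ⊆ D₂ ⊆ F_q with k < |D₁|. If a function f: F_q → F_q generates a deep hole of RS_q(D₂, k), then its restriction to D₁ generates a deep hole of RS_q(D₁, k). Equivalently: if d((f(α))_{α∈D₂}, RS_q(D₂,k)) = |D₂| - k, then d((f(α))_{α∈D₁}, RS_q(D₁,k)) = |D₁| - k. -/

import Mathlib

/-- Error distance of a word `u` to a code `C`. -/
noncomputable def errDist {ι F : Type*} [Fintype ι] [DecidableEq F]
    (u : ι → F) (C : Set (ι → F)) : ℕ :=
  sInf ((fun c => hammingDist u c) '' C)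

/-- The Reed-Solomon code with evaluation set `D` and dimension `k`. -/
noncomputable def RSCode {F : Type*} [Field F] (D : Finset F) (k : ℕ) : Set (D → F) :=
  {v | ∃ f : Polynomial F, f.degree < k ∧ ∀ α : D, v α = f.eval (α : F)}

lemma card_filter_subtype {F : Type*} [DecidableEq F] (D : Finset F) (q : F → Prop)
    [DecidablePred q] :
    (Finset.univ.filter (fun α : D => q ↑α)).card = (D.filter q).card := by
  refine Finset.card_bij (fun a _ => (a : F)) ?_ ?_ ?_
  · intro a ha
    simp only [Finset.mem_filter, Finset.mem_univ, true_and] at ha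
    simp [ha, a.2]
  · intro a _ b _ hab
    exact Subtype.coe_injective hab
  · intro b hb
    simp only [Finset.mem_filter] at hb
    exact ⟨⟨b, hb.1⟩, by simp [hb.2], rfl⟩

lemma hammingDist_poly {F : Type*} [Field F] [DecidableEq F] (D : Finset F) (f : F → F)
    (p : Polynomial F) :
    hammingDist (fun α : D => f ↑α) (fun α : D => p.eval ↑α)
      = (D.filter (fun x => f x ≠ p.eval x)).card := by
  exact card_filter_subtype D (fun x => f x ≠ p.eval x)

/-- Upper bound: the error distance to an RS code is at most `|D| - k`. -/
lemma errDist_le {F : Type*} [Field F] [DecidableEq F] (k : ℕ) (D : Finset F)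
    (hk : k ≤ D.card) (f : F → F) :
    errDist (fun α : D => f ↑α) (RSCode D k) ≤ D.card - k := by
  obtain ⟨S, hSD, hScard⟩ := Finset.exists_subset_card_eq hk
  set p := Lagrange.interpolate S id f with hp
  have hdeg : p.degree < k := by
    have := Lagrange.degree_interpolate_lt (s := S) (v := id) (r := f) (Set.injOn_id _)
    rwa [hScard] at this
  have hmem : (fun α : D => p.eval ↑α) ∈ RSCode D k := ⟨p, hdeg, fun α => rfl⟩
  have hle : hammingDist (fun α : D => f ↑α) (fun α : D => p.eval ↑α) ≤ D.card - k := by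
    rw [hammingDist_poly]
    calc (D.filter (fun x => f x ≠ p.eval x)).card ≤ (D \ S).card := by
          apply Finset.card_le_card
          intro x hx
          simp only [Finset.mem_filter] at hx
          rw [Finset.mem_sdiff]
          refine ⟨hx.1, fun hxS => hx.2 ?_⟩
          have := Lagrange.eval_interpolate_at_node (r := f) (Set.injOn_id _) hxS
          exact this.symm
      _ = D.card - k := by rw [Finset.card_sdiff_of_subset hSD, hScard]
  exact le_trans (Nat.sInf_le ⟨_, hmem, rfl⟩) hle

/-- Monotonicity of deep holes: a function generating a deep hole of `RS_q(D₂,k)`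
also generates a deep hole of `RS_q(D₁,k)` for `D₁ ⊆ D₂`. -/
theorem stmt19 {F : Type*} [Field F] [Fintype F] [DecidableEq F]
    (k : ℕ) (D₁ D₂ : Finset F) (h12 : D₁ ⊆ D₂) (hk : k < D₁.card)
    (f : F → F)
    (h : errDist (fun α : D₂ => f (α : F)) (RSCode D₂ k) = D₂.card - k) :
    errDist (fun α : D₁ => f (α : F)) (RSCode D₁ k) = D₁.card - k := by
  have hcard : D₁.card ≤ D₂.card := Finset.card_le_card h12
  refine le_antisymm (errDist_le k D₁ hk.le f) ?_
  by_contra hlt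
  push_neg at hlt
  -- the sInf is attained
  have hne : ((fun c => hammingDist (fun α : D₁ => f ↑α) c) '' RSCode D₁ k).Nonempty := by
    refine ⟨_, ⟨(fun α : D₁ => (0 : Polynomial F).eval ↑α), ⟨0, ?_, fun α => rfl⟩, rfl⟩⟩
    rw [Polynomial.degree_zero]
    exact_mod_cast WithBot.bot_lt_coe (k : ℕ)
  have hmem := Nat.sInf_mem hne
  rw [show sInf ((fun c => hammingDist (fun α : D₁ => f ↑α) c) '' RSCode D₁ k)
      = errDist (fun α : D₁ => f ↑α) (RSCode D₁ k) from rfl] at hmem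
  obtain ⟨c, ⟨p, hpdeg, hpev⟩, hcd⟩ := hmem
  have hcd' : (D₁.filter (fun x => f x ≠ p.eval x)).card
      = errDist (fun α : D₁ => f ↑α) (RSCode D₁ k) := by
    rw [← hammingDist_poly]
    have hceq : c = fun α : D₁ => p.eval ↑α := funext hpev
    rw [← hceq]; exact hcd
  have hc1 : (D₁.filter (fun x => f x ≠ p.eval x)).card < D₁.card - k := by
    rw [hcd']; exact hlt
  -- the same polynomial as a codeword of RS(D₂, k)
  have hmem2 : (fun α : D₂ => p.eval ↑α) ∈ RSCode D₂ k := ⟨p, hpdeg, fun α => rfl⟩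
  have hge : errDist (fun α : D₂ => f ↑α) (RSCode D₂ k)
      ≤ hammingDist (fun α : D₂ => f ↑α) (fun α : D₂ => p.eval ↑α) :=
    Nat.sInf_le ⟨_, hmem2, rfl⟩
  rw [h, hammingDist_poly] at hge
  have hsub : D₂.filter (fun x => f x ≠ p.eval x)
      ⊆ D₁.filter (fun x => f x ≠ p.eval x) ∪ (D₂ \ D₁) := by
    intro x hx
    simp only [Finset.mem_filter] at hx
    by_cases hx1 : x ∈ D₁
    · exact Finset.mem_union_left _ (Finset.mem_filter.2 ⟨hx1, hx.2⟩)
    · exact Finset.mem_union_right _ (Finset.mem_sdiff.2 ⟨hx.1, hx1⟩)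
  have hcount : (D₂.filter (fun x => f x ≠ p.eval x)).card
      ≤ (D₁.filter (fun x => f x ≠ p.eval x)).card + (D₂.card - D₁.card) := by
    calc (D₂.filter (fun x => f x ≠ p.eval x)).card
        ≤ (D₁.filter (fun x => f x ≠ p.eval x) ∪ (D₂ \ D₁)).card := Finset.card_le_card hsub
      _ ≤ (D₁.filter (fun x => f x ≠ p.eval x)).card + (D₂ \ D₁).card :=
          Finset.card_union_le _ _
      _ = (D₁.filter (fun x => f x ≠ p.eval x)).card + (D₂.card - D₁.card) := by
          rw [Finset.card_sdiff_of_subset h12]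
  omega
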